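/- arXiv:math/0506092 — 2 statements merged into one kernel-verified Lean document; each statement's English description precedes it below -/
import Mathlib

section
/- Let ν be a Borel measure on (0,1] with ∫ r² ν(dr) < ∞. Define Φ(q) = ∫_{(0,1]} (q r − 1 + (1−r)^q) ν(dr) for real q ≥ 1 and Ψ(q) = ∫_{(0,1]} (e^{-q r} − 1 + q r) ν(dr) for q ≥ 0. Then there exists a constant c ∈ (0,1), not depending on ν, such that c · Ψ(q) ≤ Φ(q) ≤ Ψ(q) for every real q ≥ 2. -/
open MeasureTheory

private lemma psi_nonneg (x : ℝ) : 0 ≤ Real.exp (-x) - 1 + x := by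
  have := Real.add_one_le_exp (-x); linarith

private lemma psi_nonneg' (q r : ℝ) : 0 ≤ Real.exp (-q * r) - 1 + q * r := by
  have := psi_nonneg (q * r); rwa [← neg_mul] at this

private lemma hg_deriv (t : ℝ) :
    HasDerivAt (fun t : ℝ => t ^ 2 / 2 - (Real.exp (-t) - 1 + t))
      (t - (-Real.exp (-t) + 1)) t := by
  have h1 : HasDerivAt (fun t : ℝ => t ^ 2 / 2) t t := by
    simpa using (hasDerivAt_pow 2 t).div_const 2
  have h2 : HasDerivAt (fun t : ℝ => Real.exp (-t)) (-Real.exp (-t)) t := by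
    simpa using (hasDerivAt_neg t).exp
  exact h1.sub ((h2.sub_const 1).add (hasDerivAt_id t))

private lemma psi_le_sq {x : ℝ} (hx : 0 ≤ x) :
    Real.exp (-x) - 1 + x ≤ x ^ 2 / 2 := by
  have hmono : MonotoneOn (fun t : ℝ => t ^ 2 / 2 - (Real.exp (-t) - 1 + t))
      (Set.Ici 0) := by
    apply monotoneOn_of_deriv_nonneg (convex_Ici 0)
    · exact (Continuous.continuousOn (by continuity))
    · intro t ht
      exact (hg_deriv t).differentiableAt.differentiableWithinAt
    · intro t ht
      rw [(hg_deriv t).deriv]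
      rw [interior_Ici] at ht
      have := Real.add_one_le_exp (-t)
      linarith
  have h0 := hmono (Set.self_mem_Ici) (Set.mem_Ici.mpr hx) hx
  simp at h0
  linarith

private lemma rpow_le_exp {r : ℝ} (hr : r ≤ 1) {p : ℝ} (hp : 0 ≤ p) :
    (1 - r) ^ p ≤ Real.exp (-p * r) := by
  have h1 : (0:ℝ) ≤ 1 - r := by linarith
  have h2 : 1 - r ≤ Real.exp (-r) := by
    have := Real.add_one_le_exp (-r); linarith
  calc (1 - r) ^ p ≤ Real.exp (-r) ^ p := Real.rpow_le_rpow h1 h2 hp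
    _ = Real.exp (-p * r) := by rw [← Real.exp_mul]; ring_nf

private lemma phi_hasDeriv (q : ℝ) (hq1 : 1 ≤ q) (r : ℝ) :
    HasDerivAt (fun r : ℝ => q * r - 1 + (1 - r) ^ q
        - 1 / 2 * (Real.exp (-q * r) - 1 + q * r))
      ((q - q * (1 - r) ^ (q - 1))
        - 1 / 2 * (-q * Real.exp (-q * r) + q)) r := by
  have h1 : HasDerivAt (fun r : ℝ => (1 - r) ^ q) (q * (1 - r) ^ (q - 1) * (-1)) r := by
    exact (Real.hasDerivAt_rpow_const (Or.inr hq1)).comp r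
      ((hasDerivAt_id r).const_sub 1)
  have h2 : HasDerivAt (fun r : ℝ => Real.exp (-q * r)) (Real.exp (-q * r) * (-q)) r := by
    have : HasDerivAt (fun r : ℝ => -q * r) (-q) r := by
      simpa using (hasDerivAt_id r).const_mul (-q)
    exact (Real.hasDerivAt_exp (-q * r)).comp r this
  have h3 : HasDerivAt (fun r : ℝ => q * r) q r := by
    simpa using (hasDerivAt_id r).const_mul q
  have := ((h3.sub_const 1).add h1).sub (((h2.sub_const 1).add h3).const_mul (1 / 2))
  refine this.congr_deriv ?_
  ring

private lemma lower_pointwise {q : ℝ} (hq : 2 ≤ q) {r : ℝ} (hr : r ∈ Set.Icc (0:ℝ) 1) :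
    1 / 2 * (Real.exp (-q * r) - 1 + q * r) ≤ q * r - 1 + (1 - r) ^ q := by
  have hq1 : (1:ℝ) ≤ q := by linarith
  set h := fun r : ℝ => q * r - 1 + (1 - r) ^ q
      - 1 / 2 * (Real.exp (-q * r) - 1 + q * r) with hh
  have hmono : MonotoneOn h (Set.Icc 0 1) := by
    apply monotoneOn_of_deriv_nonneg (convex_Icc 0 1)
    · intro x hx
      exact (phi_hasDeriv q hq1 x).continuousAt.continuousWithinAt
    · intro x hx
      exact (phi_hasDeriv q hq1 x).differentiableAt.differentiableWithinAt
    · intro x hx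
      rw [interior_Icc] at hx
      rw [(phi_hasDeriv q hq1 x).deriv]
      set s := Real.exp (-q * x / 2) with hs
      have hs0 : 0 < s := Real.exp_pos _
      have hs1 : s ≤ 1 := by
        rw [hs, show (1:ℝ) = Real.exp 0 by simp]
        apply Real.exp_le_exp.mpr
        nlinarith [hx.1, hq]
      have hsq : Real.exp (-q * x) = s ^ 2 := by
        rw [hs, pow_two, ← Real.exp_add]; ring_nf
      have hA : (1 - x) ^ (q - 1) ≤ s := by
        calc (1 - x) ^ (q - 1) ≤ Real.exp (-(q - 1) * x) :=
              rpow_le_exp (le_of_lt hx.2) (by linarith)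
          _ ≤ s := by
              rw [hs]
              apply Real.exp_le_exp.mpr
              nlinarith [hx.1.le, hq]
      rw [hsq]
      nlinarith [sq_nonneg (1 - s), hq, mul_nonneg (by linarith : (0:ℝ) ≤ q) (by linarith : 0 ≤ s - (1 - x) ^ (q - 1))]
  have h0 : h 0 = 0 := by
    simp [hh, Real.one_rpow]
  have := hmono (Set.mem_Icc.mpr ⟨le_refl 0, zero_le_one⟩) hr hr.1
  rw [h0] at this
  simp only [hh] at this
  linarith

private lemma upper_pointwise {q : ℝ} (hq : 0 ≤ q) {r : ℝ} (hr : r ≤ 1) :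
    q * r - 1 + (1 - r) ^ q ≤ Real.exp (-q * r) - 1 + q * r := by
  have := rpow_le_exp hr hq
  linarith

/-- There is a universal constant `c ∈ (0,1)` such that for
every Borel measure `ν` on `(0,1]` with `∫ r² ν(dr) < ∞`, setting
`Φ(q) = ∫ (qr - 1 + (1-r)^q) ν(dr)` and `Ψ(q) = ∫ (e^{-qr} - 1 + qr) ν(dr)`,
one has `c Ψ(q) ≤ Φ(q) ≤ Ψ(q)` for every real `q ≥ 2`. -/
theorem stmt3 :
    ∃ c : ℝ, c ∈ Set.Ioo (0 : ℝ) 1 ∧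
      ∀ ν : Measure ℝ, ν (Set.Ioc 0 1)ᶜ = 0 →
        (∫⁻ r, ENNReal.ofReal (r ^ 2) ∂ν < ⊤) →
        ∀ q : ℝ, 2 ≤ q →
          c * ∫ r, (Real.exp (-q * r) - 1 + q * r) ∂ν
              ≤ ∫ r, (q * r - 1 + (1 - r) ^ q) ∂ν ∧
          ∫ r, (q * r - 1 + (1 - r) ^ q) ∂ν
              ≤ ∫ r, (Real.exp (-q * r) - 1 + q * r) ∂ν := by
  refine ⟨1 / 2, ⟨by norm_num, by norm_num⟩, ?_⟩
  intro ν hν hν2 q hq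
  have hq0 : (0:ℝ) ≤ q := by linarith
  have hae : ∀ᵐ r ∂ν, r ∈ Set.Ioc (0:ℝ) 1 := mem_ae_iff.mpr hν
  -- dominating function
  have hr2 : Integrable (fun r : ℝ => r ^ 2) ν := by
    refine ⟨(by continuity : Continuous fun r : ℝ => r ^ 2).aestronglyMeasurable, ?_⟩
    exact (hasFiniteIntegral_iff_ofReal
      (Filter.Eventually.of_forall fun r => sq_nonneg r)).mpr hν2
  have hgint : Integrable (fun r : ℝ => q ^ 2 / 2 * r ^ 2) ν := hr2.const_mul _
  -- pointwise bounds on (0,1]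
  have hψb : ∀ r ∈ Set.Ioc (0:ℝ) 1,
      ‖Real.exp (-q * r) - 1 + q * r‖ ≤ q ^ 2 / 2 * r ^ 2 := by
    intro r hr
    rw [Real.norm_eq_abs, abs_of_nonneg (psi_nonneg' q r)]
    have h1 := psi_le_sq (mul_nonneg hq0 hr.1.le)
    rw [← neg_mul] at h1
    nlinarith [h1]
  have hφψ : ∀ r ∈ Set.Ioc (0:ℝ) 1,
      q * r - 1 + (1 - r) ^ q ≤ Real.exp (-q * r) - 1 + q * r :=
    fun r hr => upper_pointwise hq0 hr.2
  have hφlb : ∀ r ∈ Set.Ioc (0:ℝ) 1,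
      1 / 2 * (Real.exp (-q * r) - 1 + q * r) ≤ q * r - 1 + (1 - r) ^ q :=
    fun r hr => lower_pointwise hq ⟨hr.1.le, hr.2⟩
  -- integrability of ψ integrand
  have hψint : Integrable (fun r : ℝ => Real.exp (-q * r) - 1 + q * r) ν := by
    refine hgint.mono' (Continuous.aestronglyMeasurable (by continuity)) ?_
    filter_upwards [hae] with r hr using hψb r hr
  -- integrability of φ integrand
  have hφcont : Continuous (fun r : ℝ => q * r - 1 + (1 - r) ^ q) := by
    apply Continuous.add (by continuity)
    exact (Real.continuous_rpow_const hq0).comp (continuous_const.sub continuous_id)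
  have hφint : Integrable (fun r : ℝ => q * r - 1 + (1 - r) ^ q) ν := by
    refine hgint.mono' hφcont.aestronglyMeasurable ?_
    filter_upwards [hae] with r hr
    have h1 := hφψ r hr
    have h2 := hφlb r hr
    have h3 := psi_nonneg' q r
    have h4 := hψb r hr
    rw [Real.norm_eq_abs, abs_of_nonneg (psi_nonneg' q r)] at h4
    rw [Real.norm_eq_abs, abs_of_nonneg (by linarith)]
    linarith
  constructor
  · rw [← integral_const_mul]
    apply integral_mono_ae (hψint.const_mul _) hφint
    filter_upwards [hae] with r hr using hφlb r hr
  · apply integral_mono_ae hφint hψint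
    filter_upwards [hae] with r hr using hφψ r hr
end

section
/- Let h : ℝ → ℝ be a truncation function (nondecreasing, 1-Lipschitz, |h(x)| ≤ min(|x|, 1), h(x) = x on [−δ, δ] for some δ > 0), π a Borel measure on (0,∞) with ∫ min(r, r²) π(dr) < ∞, and (ν^{(a)})_{a>0} measures on (0,∞) supported on (0,a] with ∫ r² ν^{(a)}(dr) < ∞ satisfying Assumption (H). For 0 ≤ y ≤ y' ≤ a define γ_a(y, y') = ∫ ν^{(a)}(dr) ∫_0^a du · h(r(1_{u ≤ y} − y/a)) · h(r(1_{u ≤ y'} − y'/a)). Then: (i) |γ_a(y, y')| ≤ (y + y') ∫ ν^{(a)}(dr) min(r, r²) for all 0 ≤ y ≤ y' ≤ a; and (ii) for every M > 0, sup_{0 ≤ y ≤ y' ≤ M} | γ_a(y, y') − y ∫ π(dr) h(r)² | → 0 as a → ∞. -/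
open MeasureTheory Filter

/-- The modified second characteristic (with truncation function `h`) of a pair
of coordinates of the rescaled generalized Fleming-Viot process associated with
the measure `ν` on `(0,a]`:
`γ_a(y,y') = ∫ ν(dr) ∫_0^a du h(r(1_{u≤y} - y/a)) h(r(1_{u≤y'} - y'/a))`. -/
noncomputable def gammaChar (h : ℝ → ℝ) (ν : Measure ℝ) (a y y' : ℝ) : ℝ :=
  ∫ r, (∫ u in Set.Ioc (0 : ℝ) a,
      (h (r * ((if u ≤ y then (1 : ℝ) else 0) - y / a)) *
        h (r * ((if u ≤ y' then (1 : ℝ) else 0) - y' / a)))) ∂ν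

private lemma min_one_sq {r : ℝ} (hr : 0 ≤ r) : min r 1 * min r 1 ≤ min r (r^2) := by
  rcases le_total r 1 with h1 | h1
  · rw [min_eq_left h1, min_eq_right (by nlinarith)]; nlinarith
  · rw [min_eq_right h1, min_eq_left (by nlinarith)]; nlinarith

private lemma mul_min_one {r : ℝ} (hr : 0 ≤ r) : r * min r 1 = min r (r^2) := by
  rcases le_total r 1 with h1 | h1
  · rw [min_eq_left h1, min_eq_right (by nlinarith)]; ring
  · rw [min_eq_right h1, min_eq_left (by nlinarith)]; ring

private lemma inner_eq (h : ℝ → ℝ) {a y y' : ℝ} (r : ℝ)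
    (hy : 0 ≤ y) (hyy' : y ≤ y') (hy'a : y' ≤ a) :
    ∫ u in Set.Ioc (0 : ℝ) a,
      (h (r * ((if u ≤ y then (1 : ℝ) else 0) - y / a)) *
        h (r * ((if u ≤ y' then (1 : ℝ) else 0) - y' / a)))
    = y * (h (r * (1 - y / a)) * h (r * (1 - y' / a)))
      + (y' - y) * (h (r * (0 - y / a)) * h (r * (1 - y' / a)))
      + (a - y') * (h (r * (0 - y / a)) * h (r * (0 - y' / a))) := by
  set f : ℝ → ℝ := fun u =>
    h (r * ((if u ≤ y then (1 : ℝ) else 0) - y / a)) *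
      h (r * ((if u ≤ y' then (1 : ℝ) else 0) - y' / a)) with hf
  have hya : y ≤ a := hyy'.trans hy'a
  have e1 : Set.EqOn (fun _ : ℝ => h (r * (1 - y / a)) * h (r * (1 - y' / a))) f
      (Set.Ioc 0 y) := by
    intro u hu
    simp only [hf, if_pos hu.2, if_pos (hu.2.trans hyy')]
  have e2 : Set.EqOn (fun _ : ℝ => h (r * (0 - y / a)) * h (r * (1 - y' / a))) f
      (Set.Ioc y y') := by
    intro u hu
    simp only [hf, if_neg (not_le.2 hu.1), if_pos hu.2]
  have e3 : Set.EqOn (fun _ : ℝ => h (r * (0 - y / a)) * h (r * (0 - y' / a))) f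
      (Set.Ioc y' a) := by
    intro u hu
    simp only [hf, if_neg (not_le.2 (hyy'.trans_lt hu.1)), if_neg (not_le.2 hu.1)]
  have i1 : IntegrableOn f (Set.Ioc 0 y) := by
    refine IntegrableOn.congr_fun ?_ e1 measurableSet_Ioc
    exact integrableOn_const measure_Ioc_lt_top.ne
  have i2 : IntegrableOn f (Set.Ioc y y') := by
    refine IntegrableOn.congr_fun ?_ e2 measurableSet_Ioc
    exact integrableOn_const measure_Ioc_lt_top.ne
  have i3 : IntegrableOn f (Set.Ioc y' a) := by
    refine IntegrableOn.congr_fun ?_ e3 measurableSet_Ioc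
    exact integrableOn_const measure_Ioc_lt_top.ne
  have hsplit2 : Set.Ioc y y' ∪ Set.Ioc y' a = Set.Ioc y a :=
    Set.Ioc_union_Ioc_eq_Ioc hyy' hy'a
  have hsplit : Set.Ioc (0:ℝ) y ∪ Set.Ioc y a = Set.Ioc 0 a :=
    Set.Ioc_union_Ioc_eq_Ioc hy hya
  have c1 : ∫ u in Set.Ioc (0:ℝ) y, f u = y * (h (r * (1 - y / a)) * h (r * (1 - y' / a))) := by
    rw [setIntegral_congr_fun measurableSet_Ioc e1.symm, setIntegral_const,
      Real.volume_real_Ioc_of_le (by linarith), smul_eq_mul]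
    ring
  have c2 : ∫ u in Set.Ioc y y', f u
      = (y' - y) * (h (r * (0 - y / a)) * h (r * (1 - y' / a))) := by
    rw [setIntegral_congr_fun measurableSet_Ioc e2.symm, setIntegral_const,
      Real.volume_real_Ioc_of_le (by linarith), smul_eq_mul]
  have c3 : ∫ u in Set.Ioc y' a, f u
      = (a - y') * (h (r * (0 - y / a)) * h (r * (0 - y' / a))) := by
    rw [setIntegral_congr_fun measurableSet_Ioc e3.symm, setIntegral_const,
      Real.volume_real_Ioc_of_le (by linarith), smul_eq_mul]
  calc ∫ u in Set.Ioc (0:ℝ) a, f u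
      = (∫ u in Set.Ioc (0:ℝ) y, f u) + ∫ u in Set.Ioc y a, f u := by
        rw [← hsplit, setIntegral_union (Set.Ioc_disjoint_Ioc_of_le le_rfl) measurableSet_Ioc i1
          (by rw [← hsplit2]; exact i2.union i3)]
    _ = (∫ u in Set.Ioc (0:ℝ) y, f u) + ((∫ u in Set.Ioc y y', f u)
          + ∫ u in Set.Ioc y' a, f u) := by
        rw [← hsplit2, setIntegral_union (Set.Ioc_disjoint_Ioc_of_le le_rfl) measurableSet_Ioc i2 i3]
    _ = _ := by rw [c1, c2, c3]; ring

private lemma est_i (h : ℝ → ℝ) (h_bdd : ∀ x : ℝ, |h x| ≤ min |x| 1)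
    {a y y' r : ℝ} (ha : 0 < a) (hy : 0 ≤ y) (hyy' : y ≤ y') (hy'a : y' ≤ a) (hr : 0 ≤ r) :
    |y * (h (r * (1 - y / a)) * h (r * (1 - y' / a)))
      + (y' - y) * (h (r * (0 - y / a)) * h (r * (1 - y' / a)))
      + (a - y') * (h (r * (0 - y / a)) * h (r * (0 - y' / a)))|
    ≤ (y + y') * min r (r^2) := by
  have hya : y ≤ a := hyy'.trans hy'a
  have hda : 0 < a⁻¹ := inv_pos.2 ha
  have hy'0 : 0 ≤ y' := hy.trans hyy'
  have hd1 : 0 ≤ 1 - y / a := by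
    rw [sub_nonneg, div_le_one ha]; exact hya
  have hd2 : 0 ≤ 1 - y' / a := by
    rw [sub_nonneg, div_le_one ha]; exact hy'a
  have e1 : |r * (1 - y / a)| ≤ r := by
    rw [abs_of_nonneg (mul_nonneg hr hd1)]
    nlinarith [div_nonneg hy ha.le]
  have e2 : |r * (1 - y' / a)| ≤ r := by
    rw [abs_of_nonneg (mul_nonneg hr hd2)]
    nlinarith [div_nonneg hy'0 ha.le]
  have e3 : |r * (0 - y / a)| = r * (y / a) := by
    rw [abs_of_nonpos (by nlinarith [div_nonneg hy ha.le])]; ring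
  have e4 : |r * (0 - y' / a)| ≤ r := by
    rw [abs_of_nonpos (by nlinarith [div_nonneg hy'0 ha.le])]
    nlinarith [div_le_one ha |>.2 hy'a]
  have A1 : |h (r * (1 - y / a))| ≤ min r 1 :=
    (h_bdd _).trans (min_le_min e1 le_rfl)
  have A2 : |h (r * (1 - y' / a))| ≤ min r 1 :=
    (h_bdd _).trans (min_le_min e2 le_rfl)
  have B1 : |h (r * (0 - y / a))| ≤ min r 1 := by
    refine (h_bdd _).trans (min_le_min ?_ le_rfl)
    rw [e3]; nlinarith [div_le_one ha |>.2 hya]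
  have B1' : |h (r * (0 - y / a))| ≤ r * (y / a) :=
    (h_bdd _).trans (by rw [← e3]; exact min_le_left _ _)
  have C1 : |h (r * (0 - y' / a))| ≤ min r 1 :=
    (h_bdd _).trans (min_le_min e4 le_rfl)
  have hq0 : (0:ℝ) ≤ min r 1 := le_min hr zero_le_one
  have hm : min r 1 * min r 1 ≤ min r (r^2) := min_one_sq hr
  have hmr : r * min r 1 = min r (r^2) := mul_min_one hr
  have t1 : |y * (h (r * (1 - y / a)) * h (r * (1 - y' / a)))| ≤ y * min r (r^2) := by
    rw [abs_mul, abs_of_nonneg hy]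
    refine mul_le_mul_of_nonneg_left ?_ hy
    rw [abs_mul]
    exact (mul_le_mul A1 A2 (abs_nonneg _) hq0).trans hm
  have t2 : |(y' - y) * (h (r * (0 - y / a)) * h (r * (1 - y' / a)))|
      ≤ (y' - y) * min r (r^2) := by
    rw [abs_mul, abs_of_nonneg (by linarith : (0:ℝ) ≤ y' - y)]
    refine mul_le_mul_of_nonneg_left ?_ (by linarith)
    rw [abs_mul]
    exact (mul_le_mul B1 A2 (abs_nonneg _) hq0).trans hm
  have t3 : |(a - y') * (h (r * (0 - y / a)) * h (r * (0 - y' / a)))|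
      ≤ y * min r (r^2) := by
    rw [abs_mul, abs_of_nonneg (by linarith : (0:ℝ) ≤ a - y'), abs_mul]
    calc (a - y') * (|h (r * (0 - y / a))| * |h (r * (0 - y' / a))|)
        ≤ (a - y') * ((r * (y / a)) * min r 1) :=
          mul_le_mul_of_nonneg_left
            (mul_le_mul B1' C1 (abs_nonneg _) (by positivity)) (by linarith)
      _ ≤ a * ((r * (y / a)) * min r 1) := by
          refine mul_le_mul_of_nonneg_right (by linarith) ?_
          positivity
      _ = y * (r * min r 1) := by field_simp
      _ = y * min r (r^2) := by rw [hmr]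
  calc |y * (h (r * (1 - y / a)) * h (r * (1 - y' / a)))
      + (y' - y) * (h (r * (0 - y / a)) * h (r * (1 - y' / a)))
      + (a - y') * (h (r * (0 - y / a)) * h (r * (0 - y' / a)))|
      ≤ |y * (h (r * (1 - y / a)) * h (r * (1 - y' / a)))|
        + |(y' - y) * (h (r * (0 - y / a)) * h (r * (1 - y' / a)))|
        + |(a - y') * (h (r * (0 - y / a)) * h (r * (0 - y' / a)))| := abs_add_three _ _ _
    _ ≤ (y + y') * min r (r^2) := by linarith

private lemma keyA {r M a d : ℝ} (ha : 0 < a) (hM : 0 ≤ M) (hr : 0 ≤ r)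
    (hd : d ≤ r * M / a) :
    d * min r 1 ≤ (2 * M / a) * min r (r^2) := by
  rcases le_total r 1 with h1 | h1
  · rw [min_eq_left h1, min_eq_right (by nlinarith)]
    have h2 : d * r ≤ (r * M / a) * r := mul_le_mul_of_nonneg_right hd hr
    refine h2.trans ?_
    rw [div_mul_eq_mul_div, div_mul_eq_mul_div, div_le_div_iff₀ ha ha]
    nlinarith [mul_nonneg (mul_nonneg hM (sq_nonneg r)) ha.le]
  · rw [min_eq_right h1, min_eq_left (by nlinarith)]
    rw [mul_one]
    refine hd.trans ?_
    rw [div_mul_eq_mul_div, div_le_div_iff₀ ha ha]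
    nlinarith [mul_nonneg (mul_nonneg hM hr) ha.le]

private lemma keyC {r M a R : ℝ} (ha : 0 < a) (hM : 0 ≤ M) (hr : 0 ≤ r) (hR : 1 ≤ R) :
    (r * M) * min (r * M / a) 1
      ≤ (M^2 * (R + 1) / a) * min r (r^2) + M * (min 1 (max 0 (r - R)) * min r (r^2)) := by
  have hchi0 : (0:ℝ) ≤ min 1 (max 0 (r - R)) := le_min zero_le_one (le_max_left _ _)
  have hm0 : (0:ℝ) ≤ min r (r^2) := le_min hr (sq_nonneg r)
  rcases le_total r (R + 1) with hcase | hcase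
  · have step1 : (r * M) * min (r * M / a) 1 ≤ (r * M) * (r * M / a) :=
      mul_le_mul_of_nonneg_left (min_le_left _ _) (by positivity)
    have step2 : (r * M) * (r * M / a) ≤ (M^2 * (R + 1) / a) * min r (r^2) := by
      rcases le_total r 1 with h1 | h1
      · rw [min_eq_right (by nlinarith)]
        rw [mul_div_assoc', div_mul_eq_mul_div, div_le_div_iff₀ ha ha]
        nlinarith [mul_nonneg (mul_nonneg (mul_nonneg (sq_nonneg M) (sq_nonneg r))
          (by linarith : (0:ℝ) ≤ R)) ha.le]
      · rw [min_eq_left (by nlinarith)]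
        rw [mul_div_assoc', div_mul_eq_mul_div, div_le_div_iff₀ ha ha]
        have key : (0:ℝ) ≤ M^2 * r * a * ((R + 1) - r) :=
          mul_nonneg (by positivity) (by linarith)
        nlinarith [key]
    nlinarith [mul_nonneg hM (mul_nonneg hchi0 hm0)]
  · have hr1 : 1 ≤ r := by linarith
    have hchi : min 1 (max 0 (r - R)) = 1 := by
      rw [max_eq_right (by linarith), min_eq_left (by linarith)]
    have hmin : min r (r^2) = r := min_eq_left (by nlinarith)
    have step1 : (r * M) * min (r * M / a) 1 ≤ (r * M) * 1 :=
      mul_le_mul_of_nonneg_left (min_le_right _ _) (by positivity)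
    have h2 : (0:ℝ) ≤ (M^2 * (R + 1) / a) * min r (r^2) := by positivity
    rw [hchi, hmin]
    nlinarith

private lemma est_ii (h : ℝ → ℝ) (h_bdd : ∀ x : ℝ, |h x| ≤ min |x| 1)
    (h_lip : LipschitzWith 1 h)
    {a M R y y' r : ℝ} (ha : 0 < a) (hMa : M ≤ a) (hM : 0 < M) (hR : 1 ≤ R)
    (hy : 0 ≤ y) (hyy' : y ≤ y') (hy'M : y' ≤ M) (hr : 0 ≤ r) :
    |(y * (h (r * (1 - y / a)) * h (r * (1 - y' / a)))
      + (y' - y) * (h (r * (0 - y / a)) * h (r * (1 - y' / a)))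
      + (a - y') * (h (r * (0 - y / a)) * h (r * (0 - y' / a)))) - y * h r ^ 2|
    ≤ (M^2 * (7 + R) / a) * min r (r^2)
      + M * (min 1 (max 0 (r - R)) * min r (r^2)) := by
  have hlip : ∀ x z : ℝ, |h x - h z| ≤ |x - z| := by
    intro x z
    have := h_lip.dist_le_mul x z
    simpa [Real.dist_eq] using this
  have hy'a : y' ≤ a := hy'M.trans hMa
  have hya : y ≤ a := hyy'.trans hy'a
  have hy'0 : 0 ≤ y' := hy.trans hyy'
  have hyM : y ≤ M := hyy'.trans hy'M
  have hd1 : 0 ≤ 1 - y / a := by rw [sub_nonneg, div_le_one ha]; exact hya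
  have hd2 : 0 ≤ 1 - y' / a := by rw [sub_nonneg, div_le_one ha]; exact hy'a
  have e1 : |r * (1 - y / a)| ≤ r := by
    rw [abs_of_nonneg (mul_nonneg hr hd1)]; nlinarith [div_nonneg hy ha.le]
  have e2 : |r * (1 - y' / a)| ≤ r := by
    rw [abs_of_nonneg (mul_nonneg hr hd2)]; nlinarith [div_nonneg hy'0 ha.le]
  have e3 : |r * (0 - y / a)| = r * (y / a) := by
    rw [abs_of_nonpos (by nlinarith [div_nonneg hy ha.le])]; ring
  have e4 : |r * (0 - y' / a)| = r * (y' / a) := by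
    rw [abs_of_nonpos (by nlinarith [div_nonneg hy'0 ha.le])]; ring
  have A2 : |h (r * (1 - y' / a))| ≤ min r 1 := (h_bdd _).trans (min_le_min e2 le_rfl)
  have A0 : |h r| ≤ min r 1 := (h_bdd r).trans (min_le_min (le_of_eq (abs_of_nonneg hr)) le_rfl)
  have B1' : |h (r * (0 - y / a))| ≤ r * M / a := by
    refine ((h_bdd _).trans (min_le_left _ _)).trans ?_
    rw [e3, mul_div_assoc]
    exact mul_le_mul_of_nonneg_left (div_le_div_of_nonneg_right hyM ha.le) hr
  have C1 : |h (r * (0 - y' / a))| ≤ min (r * M / a) 1 := by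
    refine (h_bdd _).trans (min_le_min ?_ le_rfl)
    rw [e4, mul_div_assoc]
    exact mul_le_mul_of_nonneg_left (div_le_div_of_nonneg_right hy'M ha.le) hr
  -- Lipschitz differences
  have d1 : |h (r * (1 - y / a)) - h r| ≤ r * M / a := by
    refine (hlip _ _).trans ?_
    have : |r * (1 - y / a) - r| = r * (y / a) := by
      rw [abs_of_nonpos (by nlinarith [div_nonneg hy ha.le])]; ring
    rw [this, mul_div_assoc]
    exact mul_le_mul_of_nonneg_left (div_le_div_of_nonneg_right hyM ha.le) hr
  have d2 : |h (r * (1 - y' / a)) - h r| ≤ r * M / a := by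
    refine (hlip _ _).trans ?_
    have : |r * (1 - y' / a) - r| = r * (y' / a) := by
      rw [abs_of_nonpos (by nlinarith [div_nonneg hy'0 ha.le])]; ring
    rw [this, mul_div_assoc]
    exact mul_le_mul_of_nonneg_left (div_le_div_of_nonneg_right hy'M ha.le) hr
  have hq0 : (0:ℝ) ≤ min r 1 := le_min hr zero_le_one
  have hm0 : (0:ℝ) ≤ min r (r^2) := le_min hr (sq_nonneg r)
  -- term A
  have tA : |y * (h (r * (1 - y / a)) * h (r * (1 - y' / a))) - y * h r ^ 2|
      ≤ (4 * M^2 / a) * min r (r^2) := by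
    have decomp : y * (h (r * (1 - y / a)) * h (r * (1 - y' / a))) - y * h r ^ 2
        = y * ((h (r * (1 - y / a)) - h r) * h (r * (1 - y' / a))
            + h r * (h (r * (1 - y' / a)) - h r)) := by ring
    rw [decomp, abs_mul, abs_of_nonneg hy]
    have b1 : |(h (r * (1 - y / a)) - h r) * h (r * (1 - y' / a))|
        ≤ (2 * M / a) * min r (r^2) := by
      rw [abs_mul]
      exact (mul_le_mul_of_nonneg_left A2 (abs_nonneg _)).trans
        (keyA ha hM.le hr d1)
    have b2 : |h r * (h (r * (1 - y' / a)) - h r)| ≤ (2 * M / a) * min r (r^2) := by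
      rw [abs_mul, mul_comm]
      exact (mul_le_mul_of_nonneg_left A0 (abs_nonneg _)).trans (keyA ha hM.le hr d2)
    calc y * |(h (r * (1 - y / a)) - h r) * h (r * (1 - y' / a))
            + h r * (h (r * (1 - y' / a)) - h r)|
        ≤ M * ((2 * M / a) * min r (r^2) + (2 * M / a) * min r (r^2)) := by
          refine mul_le_mul hyM ((abs_add_le _ _).trans (by linarith)) (abs_nonneg _) hM.le
      _ = (4 * M^2 / a) * min r (r^2) := by ring
  -- term B
  have tB : |(y' - y) * (h (r * (0 - y / a)) * h (r * (1 - y' / a)))|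
      ≤ (2 * M^2 / a) * min r (r^2) := by
    rw [abs_mul, abs_of_nonneg (by linarith : (0:ℝ) ≤ y' - y), abs_mul]
    calc (y' - y) * (|h (r * (0 - y / a))| * |h (r * (1 - y' / a))|)
        ≤ M * ((2 * M / a) * min r (r^2)) := by
          refine mul_le_mul (by linarith) ?_ (by positivity) hM.le
          exact (mul_le_mul_of_nonneg_left A2 (abs_nonneg _)).trans (keyA ha hM.le hr B1')
      _ = (2 * M^2 / a) * min r (r^2) := by ring
  -- term C
  have tC : |(a - y') * (h (r * (0 - y / a)) * h (r * (0 - y' / a)))|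
      ≤ (M^2 * (R + 1) / a) * min r (r^2) + M * (min 1 (max 0 (r - R)) * min r (r^2)) := by
    rw [abs_mul, abs_of_nonneg (by linarith : (0:ℝ) ≤ a - y'), abs_mul]
    calc (a - y') * (|h (r * (0 - y / a))| * |h (r * (0 - y' / a))|)
        ≤ a * ((r * M / a) * min (r * M / a) 1) := by
          refine mul_le_mul (by linarith) ?_ (by positivity) ha.le
          exact mul_le_mul B1' C1 (abs_nonneg _) (by positivity)
      _ = (r * M) * min (r * M / a) 1 := by field_simp
      _ ≤ _ := keyC ha hM.le hr hR
  calc |(y * (h (r * (1 - y / a)) * h (r * (1 - y' / a)))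
      + (y' - y) * (h (r * (0 - y / a)) * h (r * (1 - y' / a)))
      + (a - y') * (h (r * (0 - y / a)) * h (r * (0 - y' / a)))) - y * h r ^ 2|
      ≤ |y * (h (r * (1 - y / a)) * h (r * (1 - y' / a))) - y * h r ^ 2|
        + |(y' - y) * (h (r * (0 - y / a)) * h (r * (1 - y' / a)))|
        + |(a - y') * (h (r * (0 - y / a)) * h (r * (0 - y' / a)))| := by
          have : (y * (h (r * (1 - y / a)) * h (r * (1 - y' / a)))
              + (y' - y) * (h (r * (0 - y / a)) * h (r * (1 - y' / a)))
              + (a - y') * (h (r * (0 - y / a)) * h (r * (0 - y' / a)))) - y * h r ^ 2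
            = (y * (h (r * (1 - y / a)) * h (r * (1 - y' / a))) - y * h r ^ 2)
              + (y' - y) * (h (r * (0 - y / a)) * h (r * (1 - y' / a)))
              + (a - y') * (h (r * (0 - y / a)) * h (r * (0 - y' / a))) := by ring
          rw [this]
          exact abs_add_three _ _ _
    _ ≤ (M^2 * (7 + R) / a) * min r (r^2)
        + M * (min 1 (max 0 (r - R)) * min r (r^2)) := by
        have expand : (M^2 * (7 + R) / a) * min r (r^2)
            = (4 * M^2 / a) * min r (r^2) + (2 * M^2 / a) * min r (r^2)
              + (M^2 * (R + 1) / a) * min r (r^2) := by ring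
        rw [expand]
        linarith

-- integrability helpers
private lemma integrable_sq_nu {ν : Measure ℝ}
    (hmom : ∫⁻ r, ENNReal.ofReal (r ^ 2) ∂ν < ⊤) :
    Integrable (fun r : ℝ => r ^ 2) ν := by
  refine ⟨(continuous_pow 2).aestronglyMeasurable, ?_⟩
  rw [hasFiniteIntegral_iff_norm]
  refine lt_of_le_of_lt (lintegral_mono fun r => ?_) hmom
  exact ENNReal.ofReal_le_ofReal
    (le_of_eq (by rw [Real.norm_eq_abs, abs_of_nonneg (sq_nonneg r)]))

private lemma integrable_min_of_ae_pos {ν : Measure ℝ}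
    (hsq : Integrable (fun r : ℝ => r ^ 2) ν)
    (hae : ∀ᵐ r ∂ν, (0:ℝ) < r) :
    Integrable (fun r : ℝ => min r (r ^ 2)) ν := by
  refine hsq.mono' ((continuous_id.min (continuous_pow 2)).aestronglyMeasurable) ?_
  filter_upwards [hae] with r hr
  rw [Real.norm_eq_abs, abs_of_nonneg (le_min hr.le (sq_nonneg r))]
  exact min_le_right _ _

private lemma hsq_le (h : ℝ → ℝ) (h_bdd : ∀ x : ℝ, |h x| ≤ min |x| 1)
    {r : ℝ} (hr : 0 < r) : h r ^ 2 ≤ min r (r ^ 2) := by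
  have hb : |h r| ≤ min r 1 := (h_bdd r).trans (le_of_eq (by rw [abs_of_pos hr]))
  calc h r ^ 2 = |h r| * |h r| := by rw [← abs_mul, ← pow_two, abs_of_nonneg (sq_nonneg _)]
    _ ≤ min r 1 * min r 1 := mul_le_mul hb hb (abs_nonneg _) (le_min hr.le zero_le_one)
    _ ≤ min r (r ^ 2) := min_one_sq hr.le



set_option maxHeartbeats 1000000 in
/-- With `h` a truncation function and `(ν^{(a)})` satisfying
Assumption (H): (i) `|γ_a(y,y')| ≤ (y+y') ∫ min(r,r²) ν^{(a)}(dr)` for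
`0 ≤ y ≤ y' ≤ a`; (ii) `γ_a(y,y') → y ∫ h(r)² π(dr)` uniformly on
`0 ≤ y ≤ y' ≤ M` as `a → ∞`. -/
theorem stmt13
    (δ : ℝ) (hδ : 0 < δ) (h : ℝ → ℝ)
    (h_mono : Monotone h) (h_lip : LipschitzWith 1 h)
    (h_bdd : ∀ x : ℝ, |h x| ≤ min |x| 1)
    (h_id : ∀ x : ℝ, |x| ≤ δ → h x = x)
    (π : Measure ℝ) (hπsupp : π (Set.Ioi 0)ᶜ = 0)
    (hπmom : ∫⁻ r, ENNReal.ofReal (min r (r ^ 2)) ∂π < ⊤)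
    (ν : ℝ → Measure ℝ)
    (hνsupp : ∀ a : ℝ, 0 < a → (ν a) (Set.Ioc 0 a)ᶜ = 0)
    (hνmom : ∀ a : ℝ, 0 < a → ∫⁻ r, ENNReal.ofReal (r ^ 2) ∂(ν a) < ⊤)
    (hH : ∀ f : ℝ → ℝ, ContinuousOn f (Set.Ioi 0) →
      (∃ C : ℝ, ∀ x ∈ Set.Ioi (0 : ℝ), |f x| ≤ C) →
      Tendsto (fun a => ∫ r in Set.Ioi (0 : ℝ), f r * min r (r ^ 2) ∂(ν a))
        atTop
        (nhds (∫ r in Set.Ioi (0 : ℝ), f r * min r (r ^ 2) ∂π))) :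
    (∀ a : ℝ, 0 < a → ∀ y y' : ℝ, 0 ≤ y → y ≤ y' → y' ≤ a →
      |gammaChar h (ν a) a y y'|
        ≤ (y + y') * ∫ r, min r (r ^ 2) ∂(ν a)) ∧
    (∀ M : ℝ, 0 < M →
      Tendsto
        (fun a : ℝ =>
          ⨆ p ∈ {p : ℝ × ℝ | 0 ≤ p.1 ∧ p.1 ≤ p.2 ∧ p.2 ≤ M},
            |gammaChar h (ν a) a p.1 p.2
              - p.1 * ∫ r in Set.Ioi (0 : ℝ), (h r) ^ 2 ∂π|)
        atTop (nhds 0)) := by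
  have hcont : Continuous h := h_lip.continuous
  have ae_mem : ∀ a : ℝ, 0 < a → ∀ᵐ r ∂(ν a), r ∈ Set.Ioc (0:ℝ) a := by
    intro a ha
    rw [MeasureTheory.ae_iff]
    simpa [Set.Ioc, Set.compl_def] using hνsupp a ha
  have int_min : ∀ a : ℝ, 0 < a → Integrable (fun r : ℝ => min r (r ^ 2)) (ν a) := by
    intro a ha
    exact integrable_min_of_ae_pos (integrable_sq_nu (hνmom a ha))
      ((ae_mem a ha).mono fun r hr => hr.1)
  have hγeq : ∀ a : ℝ, ∀ y y' : ℝ, 0 ≤ y → y ≤ y' → y' ≤ a →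
      gammaChar h (ν a) a y y' =
        ∫ r, (y * (h (r * (1 - y / a)) * h (r * (1 - y' / a)))
          + (y' - y) * (h (r * (0 - y / a)) * h (r * (1 - y' / a)))
          + (a - y') * (h (r * (0 - y / a)) * h (r * (0 - y' / a)))) ∂(ν a) := by
    intro a y y' hy hyy' hy'a
    unfold gammaChar
    exact integral_congr_ae (Filter.Eventually.of_forall fun r => inner_eq h r hy hyy' hy'a)
  constructor
  · intro a ha y y' hy hyy' hy'a
    rw [hγeq a y y' hy hyy' hy'a, ← Real.norm_eq_abs, ← integral_const_mul]
    refine norm_integral_le_of_norm_le ((int_min a ha).const_mul (y + y')) ?_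
    filter_upwards [ae_mem a ha] with r hr
    rw [Real.norm_eq_abs]
    exact est_i h h_bdd ha hy hyy' hy'a hr.1.le
  · intro M hM
    have hmin_pos : ∀ r : ℝ, r ∈ Set.Ioi (0:ℝ) → (0:ℝ) < min r (r ^ 2) :=
      fun r hr => lt_min (Set.mem_Ioi.mp hr) (pow_pos (Set.mem_Ioi.mp hr) 2)
    set I := ∫ r in Set.Ioi (0:ℝ), h r ^ 2 ∂π with hIdef
    -- convergence of ∫ h² dν a
    have cont_f0 : ContinuousOn (fun r : ℝ => h r ^ 2 / min r (r ^ 2)) (Set.Ioi 0) :=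
      ContinuousOn.div ((hcont.pow 2).continuousOn)
        ((continuous_id.min (continuous_pow 2)).continuousOn)
        (fun r hr => (hmin_pos r hr).ne')
    have bdd_f0 : ∃ C : ℝ, ∀ x ∈ Set.Ioi (0:ℝ), |h x ^ 2 / min x (x ^ 2)| ≤ C := by
      refine ⟨1, fun x hx => ?_⟩
      have hx0 : (0:ℝ) < x := Set.mem_Ioi.mp hx
      rw [abs_div, abs_of_nonneg (sq_nonneg _),
        abs_of_nonneg (le_min hx0.le (sq_nonneg x)), div_le_one (hmin_pos x hx)]
      exact hsq_le h h_bdd hx0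
    have hfe : ∀ μ : Measure ℝ,
        ∫ r in Set.Ioi (0:ℝ), h r ^ 2 / min r (r ^ 2) * min r (r ^ 2) ∂μ
          = ∫ r in Set.Ioi (0:ℝ), h r ^ 2 ∂μ := fun μ =>
      setIntegral_congr_fun measurableSet_Ioi fun r hr =>
        div_mul_cancel₀ _ (hmin_pos r hr).ne'
    have tend_I : Tendsto (fun a => ∫ r in Set.Ioi (0:ℝ), h r ^ 2 ∂(ν a)) atTop (nhds I) := by
      have htd := hH _ cont_f0 bdd_f0
      rw [hfe π] at htd
      exact htd.congr fun a => hfe (ν a)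
    have tend_T : Tendsto (fun a => ∫ r in Set.Ioi (0:ℝ), min r (r ^ 2) ∂(ν a)) atTop
        (nhds (∫ r in Set.Ioi (0:ℝ), min r (r ^ 2) ∂π)) := by
      have htd := hH (fun _ => (1:ℝ)) continuousOn_const ⟨1, fun x _ => by norm_num⟩
      simpa only [one_mul] using htd
    set T := ∫ r in Set.Ioi (0:ℝ), min r (r ^ 2) ∂π with hTdef
    have hT0 : 0 ≤ T :=
      setIntegral_nonneg measurableSet_Ioi fun r hr =>
        le_min (Set.mem_Ioi.mp hr).le (sq_nonneg r)
    -- π-integrability of min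
    have aeπ : ∀ᵐ r ∂π, r ∈ Set.Ioi (0:ℝ) := by
      rw [MeasureTheory.ae_iff]
      simpa [Set.Ioi, Set.compl_def] using hπsupp
    have int_min_π : Integrable (fun r : ℝ => min r (r ^ 2)) π := by
      refine ⟨(continuous_id.min (continuous_pow 2)).aestronglyMeasurable, ?_⟩
      rw [hasFiniteIntegral_iff_norm]
      refine lt_of_le_of_lt (lintegral_mono_ae ?_) hπmom
      filter_upwards [aeπ] with r hr
      exact ENNReal.ofReal_le_ofReal (le_of_eq
        (by rw [Real.norm_eq_abs, abs_of_nonneg (le_min (Set.mem_Ioi.mp hr).le (sq_nonneg r))]))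
    have chi_cont : ∀ c : ℝ, Continuous (fun r : ℝ =>
        min 1 (max 0 (r - c)) * min r (r ^ 2)) := by
      intro c
      exact (continuous_const.min ((continuous_const.max
        (continuous_id.sub continuous_const)))).mul
        (continuous_id.min (continuous_pow 2))
    have chi_abs : ∀ c r : ℝ, |min 1 (max 0 (r - c))| ≤ 1 := by
      intro c r
      rw [abs_of_nonneg (le_min zero_le_one (le_max_left _ _))]
      exact min_le_left _ _
    -- dominated convergence: tail integrals of π vanish
    have tend_J : Tendsto (fun n : ℕ => ∫ r in Set.Ioi (0:ℝ),
        min 1 (max 0 (r - n)) * min r (r ^ 2) ∂π) atTop (nhds 0) := by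
      have htd := tendsto_integral_of_dominated_convergence
        (μ := π.restrict (Set.Ioi 0))
        (F := fun (n : ℕ) (r : ℝ) => min 1 (max 0 (r - (n:ℝ))) * min r (r ^ 2))
        (f := fun _ => (0:ℝ)) (fun r => min r (r ^ 2))
        (fun n => (chi_cont (n:ℝ)).aestronglyMeasurable)
        int_min_π.restrict ?_ ?_
      · simpa using htd
      · intro n
        filter_upwards [ae_restrict_mem measurableSet_Ioi] with r hr
        rw [Real.norm_eq_abs, abs_mul,
          abs_of_nonneg (le_min (Set.mem_Ioi.mp hr).le (sq_nonneg r))]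
        exact mul_le_of_le_one_left (le_min (Set.mem_Ioi.mp hr).le (sq_nonneg r))
          (chi_abs _ _)
      · refine Filter.Eventually.of_forall fun r => ?_
        obtain ⟨N, hN⟩ := exists_nat_ge r
        refine tendsto_atTop_of_eventually_const (i₀ := N) fun n hn => ?_
        have hc : max 0 (r - (n:ℝ)) = 0 := by
          have : (N:ℝ) ≤ (n:ℝ) := Nat.cast_le.2 hn
          exact max_eq_left (by linarith)
        show (1 ⊓ (0 ⊔ (r - (n:ℝ)))) * (r ⊓ r ^ 2) = 0
        rw [hc]
        simp
    rw [NormedAddCommGroup.tendsto_nhds_zero]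
    intro ε hε
    set ε' := ε / (8 * (M + 1)) with hε'def
    have hε'pos : 0 < ε' := by positivity
    have hJev : ∀ᶠ n : ℕ in atTop, |∫ r in Set.Ioi (0:ℝ),
        min 1 (max 0 (r - (n:ℝ))) * min r (r ^ 2) ∂π| < ε' := by
      have htd := NormedAddCommGroup.tendsto_nhds_zero.1 tend_J ε' hε'pos
      simpa [Real.norm_eq_abs] using htd
    obtain ⟨n, hn1, hJn⟩ := ((eventually_ge_atTop 1).and hJev).exists
    set R := (n : ℝ) with hRdef
    have hR1 : 1 ≤ R := by rw [hRdef]; exact_mod_cast hn1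
    have tend_chi : Tendsto (fun a => ∫ r in Set.Ioi (0:ℝ),
        min 1 (max 0 (r - R)) * min r (r ^ 2) ∂(ν a)) atTop
        (nhds (∫ r in Set.Ioi (0:ℝ), min 1 (max 0 (r - R)) * min r (r ^ 2) ∂π)) := by
      have htd := hH (fun r => min 1 (max 0 (r - R)))
        ((continuous_const.min ((continuous_const.max
          (continuous_id.sub continuous_const)))).continuousOn)
        ⟨1, fun x _ => chi_abs R x⟩
      exact htd
    set D := M ^ 2 * (7 + R) * (T + 1) with hDdef
    have F1 : ∀ᶠ a : ℝ in atTop,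
        |(∫ r in Set.Ioi (0:ℝ), h r ^ 2 ∂(ν a)) - I| < ε' := by
      have htd := Metric.tendsto_nhds.1 tend_I ε' hε'pos
      simpa [Real.dist_eq] using htd
    have F2 : ∀ᶠ a : ℝ in atTop,
        |(∫ r in Set.Ioi (0:ℝ), min 1 (max 0 (r - R)) * min r (r ^ 2) ∂(ν a))
          - (∫ r in Set.Ioi (0:ℝ), min 1 (max 0 (r - R)) * min r (r ^ 2) ∂π)| < ε' := by
      have htd := Metric.tendsto_nhds.1 tend_chi ε' hε'pos
      simpa [Real.dist_eq] using htd
    have F3 : ∀ᶠ a : ℝ in atTop,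
        |(∫ r in Set.Ioi (0:ℝ), min r (r ^ 2) ∂(ν a)) - T| < 1 := by
      have htd := Metric.tendsto_nhds.1 tend_T 1 one_pos
      simpa [Real.dist_eq] using htd
    have F4 : ∀ᶠ a : ℝ in atTop, max M 1 ≤ a := eventually_ge_atTop _
    have F5 : ∀ᶠ a : ℝ in atTop, |D * a⁻¹| < ε / 8 := by
      have htd : Tendsto (fun a : ℝ => D * a⁻¹) atTop (nhds 0) := by
        simpa using tendsto_inv_atTop_zero.const_mul D
      have htd2 := NormedAddCommGroup.tendsto_nhds_zero.1 htd (ε/8) (by positivity)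
      simpa only [Real.norm_eq_abs] using htd2
    filter_upwards [F1, F2, F3, F4, F5] with a hF1 hF2 hF3 hF4 hF5
    have ha1 : (1:ℝ) ≤ a := le_trans (le_max_right M 1) hF4
    have ha : (0:ℝ) < a := lt_of_lt_of_le one_pos ha1
    have hMa : M ≤ a := le_trans (le_max_left M 1) hF4
    have hres : (ν a).restrict (Set.Ioi 0) = ν a :=
      Measure.restrict_eq_self_of_ae_mem
        ((ae_mem a ha).mono fun r hr => Set.mem_Ioi.mpr hr.1)
    rw [hres] at hF1 hF2 hF3
    rw [Real.norm_eq_abs, abs_of_nonneg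
      (Real.iSup_nonneg fun p => Real.iSup_nonneg fun _ => abs_nonneg _)]
    have hhalf : ε / 2 < ε := by linarith
    refine lt_of_le_of_lt (Real.iSup_le (fun p => Real.iSup_le (fun hp => ?_)
      (by positivity)) (by positivity)) hhalf
    obtain ⟨hy, hyy', hy'M⟩ := hp
    have hy'a : p.2 ≤ a := hy'M.trans hMa
    -- integrability
    have int_h2 : Integrable (fun r : ℝ => h r ^ 2) (ν a) := by
      refine (int_min a ha).mono' ((hcont.pow 2).aestronglyMeasurable) ?_
      filter_upwards [ae_mem a ha] with r hr
      rw [Real.norm_eq_abs, abs_of_nonneg (sq_nonneg _)]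
      exact hsq_le h h_bdd hr.1
    have int_chi : Integrable (fun r : ℝ =>
        min 1 (max 0 (r - R)) * min r (r ^ 2)) (ν a) := by
      refine (int_min a ha).mono' (chi_cont R).aestronglyMeasurable ?_
      filter_upwards [ae_mem a ha] with r hr
      rw [Real.norm_eq_abs, abs_mul, abs_of_nonneg (le_min hr.1.le (sq_nonneg r))]
      exact mul_le_of_le_one_left (le_min hr.1.le (sq_nonneg r)) (chi_abs _ _)
    have int_Fm : Integrable (fun r : ℝ =>
        p.1 * (h (r * (1 - p.1 / a)) * h (r * (1 - p.2 / a)))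
          + (p.2 - p.1) * (h (r * (0 - p.1 / a)) * h (r * (1 - p.2 / a)))
          + (a - p.2) * (h (r * (0 - p.1 / a)) * h (r * (0 - p.2 / a)))) (ν a) := by
      refine ((int_min a ha).const_mul (p.1 + p.2)).mono'
        (Continuous.aestronglyMeasurable ?_) ?_
      · have c1 : Continuous fun r : ℝ => h (r * (1 - p.1 / a)) :=
          hcont.comp (continuous_id.mul continuous_const)
        have c2 : Continuous fun r : ℝ => h (r * (1 - p.2 / a)) :=
          hcont.comp (continuous_id.mul continuous_const)
        have c3 : Continuous fun r : ℝ => h (r * (0 - p.1 / a)) :=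
          hcont.comp (continuous_id.mul continuous_const)
        have c4 : Continuous fun r : ℝ => h (r * (0 - p.2 / a)) :=
          hcont.comp (continuous_id.mul continuous_const)
        exact ((continuous_const.mul (c1.mul c2)).add
          (continuous_const.mul (c3.mul c2))).add (continuous_const.mul (c3.mul c4))
      · filter_upwards [ae_mem a ha] with r hr
        rw [Real.norm_eq_abs]
        exact est_i h h_bdd ha hy hyy' hy'a hr.1.le
    -- main decomposition
    have γeq := hγeq a p.1 p.2 hy hyy' hy'a
    have step1 : gammaChar h (ν a) a p.1 p.2 - p.1 * (∫ r, h r ^ 2 ∂(ν a))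
        = ∫ r, ((p.1 * (h (r * (1 - p.1 / a)) * h (r * (1 - p.2 / a)))
          + (p.2 - p.1) * (h (r * (0 - p.1 / a)) * h (r * (1 - p.2 / a)))
          + (a - p.2) * (h (r * (0 - p.1 / a)) * h (r * (0 - p.2 / a))))
            - p.1 * h r ^ 2) ∂(ν a) := by
      rw [γeq, ← integral_const_mul]
      exact (integral_sub int_Fm (int_h2.const_mul p.1)).symm
    have step2 : |gammaChar h (ν a) a p.1 p.2 - p.1 * (∫ r, h r ^ 2 ∂(ν a))|
        ≤ (M ^ 2 * (7 + R) / a) * (∫ r, min r (r ^ 2) ∂(ν a))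
          + M * (∫ r, min 1 (max 0 (r - R)) * min r (r ^ 2) ∂(ν a)) := by
      have hsum : ∫ r, ((M ^ 2 * (7 + R) / a) * min r (r ^ 2)
            + M * (min 1 (max 0 (r - R)) * min r (r ^ 2))) ∂(ν a)
          = (M ^ 2 * (7 + R) / a) * (∫ r, min r (r ^ 2) ∂(ν a))
            + M * (∫ r, min 1 (max 0 (r - R)) * min r (r ^ 2) ∂(ν a)) := by
        rw [integral_add ((int_min a ha).const_mul _) (int_chi.const_mul M),
          integral_const_mul, integral_const_mul]
      rw [step1, ← Real.norm_eq_abs, ← hsum]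
      refine norm_integral_le_of_norm_le
        (((int_min a ha).const_mul _).add (int_chi.const_mul M)) ?_
      filter_upwards [ae_mem a ha] with r hr
      rw [Real.norm_eq_abs]
      exact est_ii h h_bdd h_lip ha hMa hM hR1 hy hyy' hy'M hr.1.le
    -- numeric bounds
    have hTa : (∫ r, min r (r ^ 2) ∂(ν a)) ≤ T + 1 := by
      have habs := abs_lt.1 hF3
      linarith [habs.2]
    have hcoef : 0 ≤ M ^ 2 * (7 + R) / a := by positivity
    have t_first : (M ^ 2 * (7 + R) / a) * (∫ r, min r (r ^ 2) ∂(ν a)) ≤ ε / 8 := by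
      have e1 : (M ^ 2 * (7 + R) / a) * (∫ r, min r (r ^ 2) ∂(ν a))
          ≤ (M ^ 2 * (7 + R) / a) * (T + 1) := mul_le_mul_of_nonneg_left hTa hcoef
      have e2 : (M ^ 2 * (7 + R) / a) * (T + 1) = D * a⁻¹ := by
        rw [hDdef]; field_simp
      have e3 : D * a⁻¹ ≤ |D * a⁻¹| := le_abs_self _
      linarith [hF5]
    have hCa : (∫ r, min 1 (max 0 (r - R)) * min r (r ^ 2) ∂(ν a)) ≤ 2 * ε' := by
      have h2 := abs_lt.1 hF2
      have h3 := abs_lt.1 hJn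
      linarith [h2.2, h3.2]
    have t_second : M * (∫ r, min 1 (max 0 (r - R)) * min r (r ^ 2) ∂(ν a)) ≤ ε / 4 := by
      have e1 : M * (∫ r, min 1 (max 0 (r - R)) * min r (r ^ 2) ∂(ν a)) ≤ M * (2 * ε') :=
        mul_le_mul_of_nonneg_left hCa hM.le
      have e2 : M * (2 * ε') ≤ ε / 4 := by
        rw [hε'def]
        rw [show M * (2 * (ε / (8 * (M + 1)))) = (M * ε) / (4 * (M + 1)) from by
          field_simp; ring]
        rw [div_le_div_iff₀ (by positivity) (by norm_num : (0:ℝ) < 4)]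
        nlinarith
      linarith
    have t_third : p.1 * |(∫ r, h r ^ 2 ∂(ν a)) - I| ≤ ε / 8 := by
      have e1 : p.1 * |(∫ r, h r ^ 2 ∂(ν a)) - I| ≤ M * ε' :=
        mul_le_mul (hyy'.trans hy'M) (le_of_lt hF1) (abs_nonneg _) hM.le
      have e2 : M * ε' ≤ ε / 8 := by
        rw [hε'def, ← mul_div_assoc,
          div_le_div_iff₀ (by positivity) (by norm_num : (0:ℝ) < 8)]
        nlinarith
      linarith
    calc |gammaChar h (ν a) a p.1 p.2 - p.1 * I|
        = |(gammaChar h (ν a) a p.1 p.2 - p.1 * (∫ r, h r ^ 2 ∂(ν a)))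
            + p.1 * ((∫ r, h r ^ 2 ∂(ν a)) - I)| := by
          rw [show gammaChar h (ν a) a p.1 p.2 - p.1 * I
            = (gammaChar h (ν a) a p.1 p.2 - p.1 * (∫ r, h r ^ 2 ∂(ν a)))
              + p.1 * ((∫ r, h r ^ 2 ∂(ν a)) - I) from by ring]
      _ ≤ |gammaChar h (ν a) a p.1 p.2 - p.1 * (∫ r, h r ^ 2 ∂(ν a))|
            + p.1 * |(∫ r, h r ^ 2 ∂(ν a)) - I| := by
          refine (abs_add_le _ _).trans ?_
          rw [abs_mul, abs_of_nonneg hy]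
      _ ≤ ε / 2 := by linarith [step2, t_first, t_second, t_third]
end
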